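/- The implication from fluid bisimulation equivalence to fluid trace equivalence is strict: for any type Act containing three pairwise distinct actions a, b, c, there exist finite RLFTSs N and N′ over Act such that N ≡fl N′ but N and N′ are not fluid bisimulation equivalent. -/

import Mathlib

open scoped BigOperators

/-- A rated labeled fluid transition system (RLFTS) over a type `Act` of actions. -/
structure RLFTS (Act : Type) where
  S : Type
  E : Type
  s0 : S
  src : E → S
  tgt : E → S
  rate : E → ℝ
  label : E → Act
  RP : S → ℝ
  rate_pos : ∀ e, 0 < rate e
  out_finite : ∀ s : S, {e : E | src e = s}.Finite
  out_nonempty : ∀ s : S, ∃ e : E, src e = s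

namespace RLFTS

variable {Act : Type}

/-- Exit rate of a state. -/
noncomputable def RE (N : RLFTS Act) (s : N.S) : ℝ :=
  ∑ᶠ e ∈ {e : N.E | N.src e = s}, N.rate e

/-- Average sojourn time in a state. -/
noncomputable def SJ (N : RLFTS Act) (s : N.S) : ℝ := 1 / N.RE s

/-- Firing probability of an edge. -/
noncomputable def PTe (N : RLFTS Act) (e : N.E) : ℝ := N.rate e / N.RE (N.src e)

/-- `IsPathFrom N M es` : the list of edges `es` is a path starting in the state `M`. -/
def IsPathFrom (N : RLFTS Act) : N.S → List N.E → Prop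
  | _, [] => True
  | M, e :: es => N.src e = M ∧ IsPathFrom N (N.tgt e) es

/-- The list of states visited by a path starting in `M`. -/
def visits (N : RLFTS Act) : N.S → List N.E → List N.S
  | M, [] => [M]
  | M, e :: es => M :: visits N (N.tgt e) es

/-- Execution probability of a path. -/
noncomputable def pathPT (N : RLFTS Act) (es : List N.E) : ℝ := (es.map N.PTe).prod

/-- Cumulative execution probability of the `(σ,ς,ϱ)`-selected paths starting in `M`. -/
noncomputable def PTsel (N : RLFTS Act) (M : N.S) (σ : List Act) (ς ϱ : List ℝ) : ℝ :=
  ∑ᶠ es ∈ {es : List N.E | IsPathFrom N M es ∧ es.map N.label = σ ∧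
      (visits N M es).map N.SJ = ς ∧ (visits N M es).map N.RP = ϱ}, N.pathPT es

end RLFTS

namespace RLFTS

variable {Act : Type}

/-- Source map on the disjoint union of the edges of two RLFTSs. -/
def csrc (N N' : RLFTS Act) : N.E ⊕ N'.E → N.S ⊕ N'.S := Sum.map N.src N'.src

/-- Target map on the disjoint union of the edges of two RLFTSs. -/
def ctgt (N N' : RLFTS Act) : N.E ⊕ N'.E → N.S ⊕ N'.S := Sum.map N.tgt N'.tgt

/-- Rate function on the disjoint union of the edges of two RLFTSs. -/
def crate (N N' : RLFTS Act) : N.E ⊕ N'.E → ℝ := Sum.elim N.rate N'.rate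

/-- Labeling on the disjoint union of the edges of two RLFTSs. -/
def clabel (N N' : RLFTS Act) : N.E ⊕ N'.E → Act := Sum.elim N.label N'.label

/-- Fluid-rate function on the disjoint union of the states of two RLFTSs. -/
def cRP (N N' : RLFTS Act) : N.S ⊕ N'.S → ℝ := Sum.elim N.RP N'.RP

/-- Overall rate to move from the state `s` into the set of states `H` by action `a`,
in the disjoint union of two RLFTSs. -/
noncomputable def RMa (N N' : RLFTS Act) (a : Act) (s : N.S ⊕ N'.S)
    (H : Set (N.S ⊕ N'.S)) : ℝ :=
  ∑ᶠ e ∈ {e : N.E ⊕ N'.E | csrc N N' e = s ∧ clabel N N' e = a ∧ ctgt N N' e ∈ H},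
    crate N N' e

/-- `R` is a fluid bisimulation between the RLFTSs `N` and `N'`. -/
def FluidBisim (N N' : RLFTS Act) (R : (N.S ⊕ N'.S) → (N.S ⊕ N'.S) → Prop) : Prop :=
  Equivalence R ∧ R (Sum.inl N.s0) (Sum.inr N'.s0) ∧
    ∀ s1 s2, R s1 s2 → cRP N N' s1 = cRP N N' s2 ∧
      ∀ (a : Act) (s : N.S ⊕ N'.S), RMa N N' a s1 {v | R s v} = RMa N N' a s2 {v | R s v}

/-- The RLFTSs `N` and `N'` are fluid bisimulation equivalent. -/
def FluidBisimEquiv (N N' : RLFTS Act) : Prop := ∃ R, FluidBisim N N' R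

end RLFTS

namespace RLFTS

/-- The RLFTSs `N` and `N'` are fluid trace equivalent: the cumulative probabilities of the
`(σ,ς,ϱ)`-selected paths from the initial states coincide for every triple `(σ,ς,ϱ)` of lists
over `Act`, `ℝ_{>0}` and `ℝ`. -/
def FluidTraceEquiv {Act : Type} (N N' : RLFTS Act) : Prop :=
  ∀ (σ : List Act) (ς ϱ : List ℝ), (∀ x ∈ ς, 0 < x) →
    N.PTsel N.s0 σ ς ϱ = N'.PTsel N'.s0 σ ς ϱ

end RLFTS

namespace RLFTS

variable {Act : Type}

lemma PTsel_snil (N : RLFTS Act) (M : N.S) (σ : List Act) (ϱ : List ℝ) :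
    N.PTsel M σ [] ϱ = 0 := by
  have h : {es : List N.E | IsPathFrom N M es ∧ es.map N.label = σ ∧
      (visits N M es).map N.SJ = ([] : List ℝ) ∧ (visits N M es).map N.RP = ϱ} = ∅ := by
    ext es
    cases es <;> simp [visits]
  rw [PTsel, h, finsum_mem_empty]

lemma PTsel_rnil (N : RLFTS Act) (M : N.S) (σ : List Act) (ς : List ℝ) :
    N.PTsel M σ ς [] = 0 := by
  have h : {es : List N.E | IsPathFrom N M es ∧ es.map N.label = σ ∧
      (visits N M es).map N.SJ = ς ∧ (visits N M es).map N.RP = ([] : List ℝ)} = ∅ := by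
    ext es
    cases es <;> simp [visits]
  rw [PTsel, h, finsum_mem_empty]

lemma PTsel_nil (N : RLFTS Act) (M : N.S) (ς ϱ : List ℝ) :
    N.PTsel M [] ς ϱ = if ς = [N.SJ M] ∧ ϱ = [N.RP M] then 1 else 0 := by
  classical
  by_cases h : ς = [N.SJ M] ∧ ϱ = [N.RP M]
  · rw [if_pos h]
    have hset : {es : List N.E | IsPathFrom N M es ∧ es.map N.label = ([] : List Act) ∧
        (visits N M es).map N.SJ = ς ∧ (visits N M es).map N.RP = ϱ} = {([] : List N.E)} := by
      ext es
      cases es <;> simp [visits, IsPathFrom, h.1, h.2]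
    rw [PTsel, hset, finsum_mem_singleton]
    simp [pathPT]
  · rw [if_neg h]
    have hset : {es : List N.E | IsPathFrom N M es ∧ es.map N.label = ([] : List Act) ∧
        (visits N M es).map N.SJ = ς ∧ (visits N M es).map N.RP = ϱ} = ∅ := by
      ext es
      cases es <;> simp [visits, IsPathFrom]
      tauto
    rw [PTsel, hset, finsum_mem_empty]

lemma PTsel_cons (N : RLFTS Act) [Finite N.E] (M : N.S) (x : Act) (σ : List Act)
    (t r : ℝ) (ς ϱ : List ℝ) :
    N.PTsel M (x::σ) (t::ς) (r::ϱ) =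
      if N.SJ M = t ∧ N.RP M = r then
        ∑ᶠ e ∈ {e : N.E | N.src e = M ∧ N.label e = x},
          N.PTe e * N.PTsel (N.tgt e) σ ς ϱ
      else 0 := by
  classical
  set T : N.S → Set (List N.E) := fun s => {es | IsPathFrom N s es ∧ es.map N.label = σ ∧
      (visits N s es).map N.SJ = ς ∧ (visits N s es).map N.RP = ϱ} with hT
  have hTfin : ∀ s, (T s).Finite := fun s =>
    (List.finite_length_eq N.E σ.length).subset (fun es hes => by
      have := congrArg List.length hes.2.1
      simpa using this)
  set U : N.E → Set (List N.E) := fun e =>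
    if N.src e = M ∧ N.label e = x ∧ N.SJ M = t ∧ N.RP M = r
    then (List.cons e) '' T (N.tgt e) else ∅ with hU
  have hUfin : ∀ e, (U e).Finite := by
    intro e
    by_cases h : N.src e = M ∧ N.label e = x ∧ N.SJ M = t ∧ N.RP M = r
    · simp only [U, if_pos h]; exact (hTfin _).image _
    · simp only [U, if_neg h]; exact Set.finite_empty
  have hdisj : Pairwise (Function.onFun Disjoint U) := by
    intro i j hij
    refine Set.disjoint_left.mpr fun l hli hlj => ?_
    simp only [U] at hli hlj
    split at hli
    · split at hlj
      · obtain ⟨es, _, rfl⟩ := hli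
        obtain ⟨es', _, h⟩ := hlj
        exact hij (List.cons.injEq .. ▸ h).1.symm
      · exact hlj
    · exact hli
  have hS : {es : List N.E | IsPathFrom N M es ∧ es.map N.label = x::σ ∧
      (visits N M es).map N.SJ = t::ς ∧ (visits N M es).map N.RP = r::ϱ} = ⋃ e, U e := by
    ext l
    simp only [Set.mem_setOf_eq, Set.mem_iUnion]
    constructor
    · rintro ⟨hp, hl, hs, hr⟩
      cases l with
      | nil => simp at hl
      | cons e es =>
        obtain ⟨h1, h2⟩ := hp
        simp only [List.map_cons, List.cons.injEq, visits] at hl hs hr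
        refine ⟨e, ?_⟩
        rw [hU]
        simp only
        rw [if_pos ⟨h1, hl.1, hs.1, hr.1⟩]
        exact ⟨es, ⟨h2, hl.2, hs.2, hr.2⟩, rfl⟩
    · rintro ⟨e, hl⟩
      rw [hU] at hl
      simp only at hl
      split at hl
      · rename_i hcond
        obtain ⟨es, hes, rfl⟩ := hl
        exact ⟨⟨hcond.1, hes.1⟩, by simp [hcond.2.1, hes.2.1],
          by simp [visits, hcond.2.2.1, hes.2.2.1],
          by simp [visits, hcond.2.2.2, hes.2.2.2]⟩
      · exact absurd hl (Set.notMem_empty _)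
  rw [PTsel, hS, finsum_mem_iUnion hdisj hUfin]
  by_cases hMg : N.SJ M = t ∧ N.RP M = r
  · rw [if_pos hMg, finsum_mem_def]
    refine finsum_congr fun e => ?_
    rw [Set.indicator_apply]
    simp only [Set.mem_setOf_eq]
    by_cases he : N.src e = M ∧ N.label e = x
    · rw [if_pos he]
      have hUe : U e = (List.cons e) '' T (N.tgt e) := by
        rw [hU]; exact if_pos ⟨he.1, he.2, hMg.1, hMg.2⟩
      rw [hUe, finsum_mem_image (fun p _ q _ h => by simpa using h)]
      have hstep : ∀ es ∈ T (N.tgt e), N.pathPT (e :: es) = N.PTe e * N.pathPT es :=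
        fun es _ => by simp [pathPT]
      rw [finsum_mem_congr rfl hstep]
      have : N.PTsel (N.tgt e) σ ς ϱ = ∑ᶠ es ∈ T (N.tgt e), N.pathPT es := rfl
      rw [this, ← (hTfin (N.tgt e)).coe_toFinset, finsum_mem_coe_finset,
        finsum_mem_coe_finset, Finset.mul_sum]
    · rw [if_neg he]
      have hUe : U e = ∅ := by rw [hU]; exact if_neg (by tauto)
      rw [hUe, finsum_mem_empty]
  · rw [if_neg hMg]
    have : ∀ e, U e = ∅ := fun e => by rw [hU]; exact if_neg (by tauto)
    simp [this]

end RLFTS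

namespace FluidCex
open RLFTS
open scoped Classical

inductive NS | s0 | s1 | sk deriving DecidableEq
inductive NE | ea | eb | ec | el deriving DecidableEq
inductive MS | t0 | t1 | t2 | sk deriving DecidableEq
inductive ME | fa1 | fa2 | fb | fc | fl deriving DecidableEq
instance : Fintype NS := ⟨{.s0, .s1, .sk}, fun x => by cases x <;> decide⟩
instance : Fintype NE := ⟨{.ea, .eb, .ec, .el}, fun x => by cases x <;> decide⟩
instance : Fintype MS := ⟨{.t0, .t1, .t2, .sk}, fun x => by cases x <;> decide⟩
instance : Fintype ME := ⟨{.fa1, .fa2, .fb, .fc, .fl}, fun x => by cases x <;> decide⟩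

def nsrc : NE → NS | .ea => .s0 | .eb => .s1 | .ec => .s1 | .el => .sk
def ntgt : NE → NS | .ea => .s1 | .eb => .sk | .ec => .sk | .el => .sk
noncomputable def nrate : NE → ℝ | .ea => 2 | .eb => 1 | .ec => 1 | .el => 2
def msrc : ME → MS | .fa1 => .t0 | .fa2 => .t0 | .fb => .t1 | .fc => .t2 | .fl => .sk
def mtgt : ME → MS | .fa1 => .t1 | .fa2 => .t2 | .fb => .sk | .fc => .sk | .fl => .sk
noncomputable def mrate : ME → ℝ | .fa1 => 1 | .fa2 => 1 | .fb => 2 | .fc => 2 | .fl => 2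

variable {Act : Type} (a b c : Act)

def nlabel : NE → Act | .ea => a | .eb => b | .ec => c | .el => a
def mlabel : ME → Act | .fa1 => a | .fa2 => a | .fb => b | .fc => c | .fl => a

@[reducible] noncomputable def Nsys : RLFTS Act where
  S := NS; E := NE; s0 := .s0
  src := nsrc; tgt := ntgt; rate := nrate; label := nlabel a b c
  RP := fun _ => 0
  rate_pos := by intro e; cases e <;> norm_num [nrate]
  out_finite := fun _ => Set.toFinite _
  out_nonempty := by intro s; cases s; exacts [⟨.ea, rfl⟩, ⟨.eb, rfl⟩, ⟨.el, rfl⟩]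

@[reducible] noncomputable def Msys : RLFTS Act where
  S := MS; E := ME; s0 := .t0
  src := msrc; tgt := mtgt; rate := mrate; label := mlabel a b c
  RP := fun _ => 0
  rate_pos := by intro e; cases e <;> norm_num [mrate]
  out_finite := fun _ => Set.toFinite _
  out_nonempty := by intro s; cases s; exacts [⟨.fa1, rfl⟩, ⟨.fb, rfl⟩, ⟨.fc, rfl⟩, ⟨.fl, rfl⟩]

instance : Finite (Nsys a b c).E := inferInstanceAs (Finite NE)
instance : Finite (Msys a b c).E := inferInstanceAs (Finite ME)

@[simp] lemma Nsys_src : (Nsys a b c).src = nsrc := rfl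
@[simp] lemma Nsys_tgt : (Nsys a b c).tgt = ntgt := rfl
@[simp] lemma Nsys_rate : (Nsys a b c).rate = nrate := rfl
@[simp] lemma Nsys_label : (Nsys a b c).label = nlabel a b c := rfl
@[simp] lemma Msys_src : (Msys a b c).src = msrc := rfl
@[simp] lemma Msys_tgt : (Msys a b c).tgt = mtgt := rfl
@[simp] lemma Msys_rate : (Msys a b c).rate = mrate := rfl
@[simp] lemma Msys_label : (Msys a b c).label = mlabel a b c := rfl

@[simp] lemma NRP (s : NS) : (Nsys a b c).RP s = 0 := rfl
@[simp] lemma MRP (s : MS) : (Msys a b c).RP s = 0 := rfl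

@[simp] lemma NRE (s : NS) : (Nsys a b c).RE s = 2 := by
  cases s
  · have h : {e : (Nsys a b c).E | (Nsys a b c).src e = .s0} = {NE.ea} := by
      ext e; cases e <;> simp [nsrc]
    rw [RE, h, finsum_mem_singleton]; norm_num [nrate]
  · have h : {e : (Nsys a b c).E | (Nsys a b c).src e = .s1} = {NE.eb, NE.ec} := by
      ext e; cases e <;> simp [nsrc]
    rw [RE, h, finsum_mem_pair (by simp)]; norm_num [nrate]
  · have h : {e : (Nsys a b c).E | (Nsys a b c).src e = .sk} = {NE.el} := by
      ext e; cases e <;> simp [nsrc]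
    rw [RE, h, finsum_mem_singleton]; norm_num [nrate]

@[simp] lemma MRE (s : MS) : (Msys a b c).RE s = 2 := by
  cases s
  · have h : {e : (Msys a b c).E | (Msys a b c).src e = .t0} = {ME.fa1, ME.fa2} := by
      ext e; cases e <;> simp [msrc]
    rw [RE, h, finsum_mem_pair (by simp)]; norm_num [mrate]
  · have h : {e : (Msys a b c).E | (Msys a b c).src e = .t1} = {ME.fb} := by
      ext e; cases e <;> simp [msrc]
    rw [RE, h, finsum_mem_singleton]; norm_num [mrate]
  · have h : {e : (Msys a b c).E | (Msys a b c).src e = .t2} = {ME.fc} := by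
      ext e; cases e <;> simp [msrc]
    rw [RE, h, finsum_mem_singleton]; norm_num [mrate]
  · have h : {e : (Msys a b c).E | (Msys a b c).src e = .sk} = {ME.fl} := by
      ext e; cases e <;> simp [msrc]
    rw [RE, h, finsum_mem_singleton]; norm_num [mrate]

@[simp] lemma NSJ (s : NS) : (Nsys a b c).SJ s = 1/2 := by rw [SJ, NRE]
@[simp] lemma MSJ (s : MS) : (Msys a b c).SJ s = 1/2 := by rw [SJ, MRE]

@[simp] lemma NPTe (e : NE) : (Nsys a b c).PTe e =
    (match e with | .ea => 1 | .eb => 1/2 | .ec => 1/2 | .el => 1 : ℝ) := by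
  cases e <;> (rw [PTe]; norm_num [nrate, nsrc, NRE])

@[simp] lemma MPTe (e : ME) : (Msys a b c).PTe e =
    (match e with | .fa1 => 1/2 | .fa2 => 1/2 | .fb => 1 | .fc => 1 | .fl => 1 : ℝ) := by
  cases e <;> (rw [PTe]; norm_num [mrate, msrc, MRE])

end FluidCex

namespace FluidCex
open RLFTS
open scoped Classical

variable {Act : Type} (a b c : Act)

lemma Nstep_s0 (x : Act) (σ : List Act) (t r : ℝ) (ς ϱ : List ℝ) :
    (Nsys a b c).PTsel .s0 (x::σ) (t::ς) (r::ϱ) =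
      if (1/2 : ℝ) = t ∧ (0:ℝ) = r then
        (if a = x then (Nsys a b c).PTsel .s1 σ ς ϱ else 0)
      else 0 := by
  classical
  rw [PTsel_cons]
  simp only [NSJ, NRP]
  by_cases hg : (1/2:ℝ) = t ∧ (0:ℝ) = r
  · rw [if_pos hg, if_pos hg]
    by_cases hax : a = x
    · have hset : {e : (Nsys a b c).E | (Nsys a b c).src e = .s0 ∧
          (Nsys a b c).label e = x} = {NE.ea} := by
        ext e; cases e <;> simp [nsrc, nlabel, hax]
      rw [hset, finsum_mem_singleton, if_pos hax]
      simp [ntgt]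
    · have hset : {e : (Nsys a b c).E | (Nsys a b c).src e = .s0 ∧
          (Nsys a b c).label e = x} = ∅ := by
        ext e; cases e <;> simp [nsrc, nlabel, hax]
      rw [hset, finsum_mem_empty, if_neg hax]
  · rw [if_neg hg, if_neg hg]

lemma Nstep_s1 (hbc : b ≠ c) (x : Act) (σ : List Act) (t r : ℝ) (ς ϱ : List ℝ) :
    (Nsys a b c).PTsel .s1 (x::σ) (t::ς) (r::ϱ) =
      if (1/2 : ℝ) = t ∧ (0:ℝ) = r then
        (if b = x then (1/2 : ℝ) * (Nsys a b c).PTsel .sk σ ς ϱ else 0) +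
        (if c = x then (1/2 : ℝ) * (Nsys a b c).PTsel .sk σ ς ϱ else 0)
      else 0 := by
  classical
  rw [PTsel_cons]
  simp only [NSJ, NRP]
  by_cases hg : (1/2:ℝ) = t ∧ (0:ℝ) = r
  · rw [if_pos hg, if_pos hg]
    by_cases hb : b = x <;> by_cases hc : c = x
    · exact absurd (hb.trans hc.symm) hbc
    · have hset : {e : (Nsys a b c).E | (Nsys a b c).src e = .s1 ∧
          (Nsys a b c).label e = x} = {NE.eb} := by
        ext e; cases e <;> simp [nsrc, nlabel, hb, hc]
      rw [hset, finsum_mem_singleton, if_pos hb, if_neg hc]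
      simp [ntgt]
    · have hset : {e : (Nsys a b c).E | (Nsys a b c).src e = .s1 ∧
          (Nsys a b c).label e = x} = {NE.ec} := by
        ext e; cases e <;> simp [nsrc, nlabel, hb, hc]
      rw [hset, finsum_mem_singleton, if_neg hb, if_pos hc]
      simp [ntgt]
    · have hset : {e : (Nsys a b c).E | (Nsys a b c).src e = .s1 ∧
          (Nsys a b c).label e = x} = ∅ := by
        ext e; cases e <;> simp [nsrc, nlabel, hb, hc]
      rw [hset, finsum_mem_empty, if_neg hb, if_neg hc]
      norm_num
  · rw [if_neg hg, if_neg hg]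

lemma Nstep_sk (x : Act) (σ : List Act) (t r : ℝ) (ς ϱ : List ℝ) :
    (Nsys a b c).PTsel .sk (x::σ) (t::ς) (r::ϱ) =
      if (1/2 : ℝ) = t ∧ (0:ℝ) = r then
        (if a = x then (Nsys a b c).PTsel .sk σ ς ϱ else 0)
      else 0 := by
  classical
  rw [PTsel_cons]
  simp only [NSJ, NRP]
  by_cases hg : (1/2:ℝ) = t ∧ (0:ℝ) = r
  · rw [if_pos hg, if_pos hg]
    by_cases hax : a = x
    · have hset : {e : (Nsys a b c).E | (Nsys a b c).src e = .sk ∧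
          (Nsys a b c).label e = x} = {NE.el} := by
        ext e; cases e <;> simp [nsrc, nlabel, hax]
      rw [hset, finsum_mem_singleton, if_pos hax]
      simp [ntgt]
    · have hset : {e : (Nsys a b c).E | (Nsys a b c).src e = .sk ∧
          (Nsys a b c).label e = x} = ∅ := by
        ext e; cases e <;> simp [nsrc, nlabel, hax]
      rw [hset, finsum_mem_empty, if_neg hax]
  · rw [if_neg hg, if_neg hg]

lemma Mstep_t0 (x : Act) (σ : List Act) (t r : ℝ) (ς ϱ : List ℝ) :
    (Msys a b c).PTsel .t0 (x::σ) (t::ς) (r::ϱ) =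
      if (1/2 : ℝ) = t ∧ (0:ℝ) = r then
        (if a = x then (1/2 : ℝ) * (Msys a b c).PTsel .t1 σ ς ϱ +
          (1/2 : ℝ) * (Msys a b c).PTsel .t2 σ ς ϱ else 0)
      else 0 := by
  classical
  rw [PTsel_cons]
  simp only [MSJ, MRP]
  by_cases hg : (1/2:ℝ) = t ∧ (0:ℝ) = r
  · rw [if_pos hg, if_pos hg]
    by_cases hax : a = x
    · have hset : {e : (Msys a b c).E | (Msys a b c).src e = .t0 ∧
          (Msys a b c).label e = x} = {ME.fa1, ME.fa2} := by
        ext e; cases e <;> simp [msrc, mlabel, hax]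
      rw [hset, finsum_mem_pair (by simp), if_pos hax]
      simp [mtgt]
    · have hset : {e : (Msys a b c).E | (Msys a b c).src e = .t0 ∧
          (Msys a b c).label e = x} = ∅ := by
        ext e; cases e <;> simp [msrc, mlabel, hax]
      rw [hset, finsum_mem_empty, if_neg hax]
  · rw [if_neg hg, if_neg hg]

lemma Mstep_t1 (x : Act) (σ : List Act) (t r : ℝ) (ς ϱ : List ℝ) :
    (Msys a b c).PTsel .t1 (x::σ) (t::ς) (r::ϱ) =
      if (1/2 : ℝ) = t ∧ (0:ℝ) = r then
        (if b = x then (Msys a b c).PTsel .sk σ ς ϱ else 0)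
      else 0 := by
  classical
  rw [PTsel_cons]
  simp only [MSJ, MRP]
  by_cases hg : (1/2:ℝ) = t ∧ (0:ℝ) = r
  · rw [if_pos hg, if_pos hg]
    by_cases hb : b = x
    · have hset : {e : (Msys a b c).E | (Msys a b c).src e = .t1 ∧
          (Msys a b c).label e = x} = {ME.fb} := by
        ext e; cases e <;> simp [msrc, mlabel, hb]
      rw [hset, finsum_mem_singleton, if_pos hb]
      simp [mtgt]
    · have hset : {e : (Msys a b c).E | (Msys a b c).src e = .t1 ∧
          (Msys a b c).label e = x} = ∅ := by
        ext e; cases e <;> simp [msrc, mlabel, hb]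
      rw [hset, finsum_mem_empty, if_neg hb]
  · rw [if_neg hg, if_neg hg]

lemma Mstep_t2 (x : Act) (σ : List Act) (t r : ℝ) (ς ϱ : List ℝ) :
    (Msys a b c).PTsel .t2 (x::σ) (t::ς) (r::ϱ) =
      if (1/2 : ℝ) = t ∧ (0:ℝ) = r then
        (if c = x then (Msys a b c).PTsel .sk σ ς ϱ else 0)
      else 0 := by
  classical
  rw [PTsel_cons]
  simp only [MSJ, MRP]
  by_cases hg : (1/2:ℝ) = t ∧ (0:ℝ) = r
  · rw [if_pos hg, if_pos hg]
    by_cases hc : c = x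
    · have hset : {e : (Msys a b c).E | (Msys a b c).src e = .t2 ∧
          (Msys a b c).label e = x} = {ME.fc} := by
        ext e; cases e <;> simp [msrc, mlabel, hc]
      rw [hset, finsum_mem_singleton, if_pos hc]
      simp [mtgt]
    · have hset : {e : (Msys a b c).E | (Msys a b c).src e = .t2 ∧
          (Msys a b c).label e = x} = ∅ := by
        ext e; cases e <;> simp [msrc, mlabel, hc]
      rw [hset, finsum_mem_empty, if_neg hc]
  · rw [if_neg hg, if_neg hg]

lemma Mstep_sk (x : Act) (σ : List Act) (t r : ℝ) (ς ϱ : List ℝ) :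
    (Msys a b c).PTsel .sk (x::σ) (t::ς) (r::ϱ) =
      if (1/2 : ℝ) = t ∧ (0:ℝ) = r then
        (if a = x then (Msys a b c).PTsel .sk σ ς ϱ else 0)
      else 0 := by
  classical
  rw [PTsel_cons]
  simp only [MSJ, MRP]
  by_cases hg : (1/2:ℝ) = t ∧ (0:ℝ) = r
  · rw [if_pos hg, if_pos hg]
    by_cases hax : a = x
    · have hset : {e : (Msys a b c).E | (Msys a b c).src e = .sk ∧
          (Msys a b c).label e = x} = {ME.fl} := by
        ext e; cases e <;> simp [msrc, mlabel, hax]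
      rw [hset, finsum_mem_singleton, if_pos hax]
      simp [mtgt]
    · have hset : {e : (Msys a b c).E | (Msys a b c).src e = .sk ∧
          (Msys a b c).label e = x} = ∅ := by
        ext e; cases e <;> simp [msrc, mlabel, hax]
      rw [hset, finsum_mem_empty, if_neg hax]
  · rw [if_neg hg, if_neg hg]

lemma sk_eq : ∀ (σ : List Act) (ς ϱ : List ℝ),
    (Nsys a b c).PTsel .sk σ ς ϱ = (Msys a b c).PTsel .sk σ ς ϱ := by
  intro σ
  induction σ with
  | nil =>
    intro ς ϱ
    rw [PTsel_nil, PTsel_nil]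
    simp
  | cons x σ ih =>
    intro ς ϱ
    cases ς with
    | nil => rw [PTsel_snil, PTsel_snil]
    | cons t ς =>
      cases ϱ with
      | nil => rw [PTsel_rnil, PTsel_rnil]
      | cons r ϱ =>
        rw [Nstep_sk, Mstep_sk, ih]

lemma s1_eq (hbc : b ≠ c) : ∀ (σ : List Act) (ς ϱ : List ℝ),
    (Nsys a b c).PTsel .s1 σ ς ϱ =
      (1/2 : ℝ) * (Msys a b c).PTsel .t1 σ ς ϱ +
      (1/2 : ℝ) * (Msys a b c).PTsel .t2 σ ς ϱ := by
  intro σ ς ϱ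
  cases σ with
  | nil =>
    rw [PTsel_nil, PTsel_nil, PTsel_nil]
    simp only [NSJ, MSJ, NRP, MRP]
    split_ifs <;> norm_num
  | cons x σ =>
    cases ς with
    | nil => rw [PTsel_snil, PTsel_snil, PTsel_snil]; norm_num
    | cons t ς =>
      cases ϱ with
      | nil => rw [PTsel_rnil, PTsel_rnil, PTsel_rnil]; norm_num
      | cons r ϱ =>
        rw [Nstep_s1 a b c hbc, Mstep_t1, Mstep_t2, sk_eq]
        split_ifs <;> ring

lemma s0_eq (hbc : b ≠ c) : ∀ (σ : List Act) (ς ϱ : List ℝ),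
    (Nsys a b c).PTsel .s0 σ ς ϱ = (Msys a b c).PTsel .t0 σ ς ϱ := by
  intro σ ς ϱ
  cases σ with
  | nil =>
    rw [PTsel_nil, PTsel_nil]
    simp
  | cons x σ =>
    cases ς with
    | nil => rw [PTsel_snil, PTsel_snil]
    | cons t ς =>
      cases ϱ with
      | nil => rw [PTsel_rnil, PTsel_rnil]
      | cons r ϱ =>
        rw [Nstep_s0, Mstep_t0, s1_eq a b c hbc]

end FluidCex

namespace FluidCex
open RLFTS
open scoped Classical

variable {Act : Type} (a b c : Act)

lemma RM1 (H : Set ((Nsys a b c).S ⊕ (Msys a b c).S)) :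
    RMa (Nsys a b c) (Msys a b c) a (Sum.inl NS.s0) H =
      if Sum.inl NS.s1 ∈ H then 2 else 0 := by
  classical
  by_cases h : Sum.inl NS.s1 ∈ H
  · have hset : {e : (Nsys a b c).E ⊕ (Msys a b c).E |
        csrc (Nsys a b c) (Msys a b c) e = Sum.inl NS.s0 ∧
        clabel (Nsys a b c) (Msys a b c) e = a ∧
        ctgt (Nsys a b c) (Msys a b c) e ∈ H} = {Sum.inl NE.ea} := by
      ext e
      rcases e with e | e <;> cases e <;>
        simp [csrc, ctgt, clabel, nsrc, msrc, nlabel, mlabel, ntgt, mtgt, h]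
    rw [RMa, hset, finsum_mem_singleton, if_pos h]
    norm_num [crate, nrate]
  · have hset : {e : (Nsys a b c).E ⊕ (Msys a b c).E |
        csrc (Nsys a b c) (Msys a b c) e = Sum.inl NS.s0 ∧
        clabel (Nsys a b c) (Msys a b c) e = a ∧
        ctgt (Nsys a b c) (Msys a b c) e ∈ H} = ∅ := by
      ext e
      rcases e with e | e <;> cases e <;>
        simp [csrc, ctgt, clabel, nsrc, msrc, nlabel, mlabel, ntgt, mtgt, h]
    rw [RMa, hset, finsum_mem_empty, if_neg h]

lemma RM2 (H : Set ((Nsys a b c).S ⊕ (Msys a b c).S)) :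
    RMa (Nsys a b c) (Msys a b c) a (Sum.inr MS.t0) H =
      (if Sum.inr MS.t1 ∈ H then 1 else 0) + (if Sum.inr MS.t2 ∈ H then 1 else 0) := by
  classical
  by_cases h1 : Sum.inr MS.t1 ∈ H <;> by_cases h2 : Sum.inr MS.t2 ∈ H
  · have hset : {e : (Nsys a b c).E ⊕ (Msys a b c).E |
        csrc (Nsys a b c) (Msys a b c) e = Sum.inr MS.t0 ∧
        clabel (Nsys a b c) (Msys a b c) e = a ∧
        ctgt (Nsys a b c) (Msys a b c) e ∈ H} = {Sum.inr ME.fa1, Sum.inr ME.fa2} := by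
      ext e
      rcases e with e | e <;> cases e <;>
        simp [csrc, ctgt, clabel, nsrc, msrc, nlabel, mlabel, ntgt, mtgt, h1, h2]
    rw [RMa, hset, finsum_mem_pair (by simp), if_pos h1, if_pos h2]
    norm_num [crate, mrate]
  · have hset : {e : (Nsys a b c).E ⊕ (Msys a b c).E |
        csrc (Nsys a b c) (Msys a b c) e = Sum.inr MS.t0 ∧
        clabel (Nsys a b c) (Msys a b c) e = a ∧
        ctgt (Nsys a b c) (Msys a b c) e ∈ H} = {Sum.inr ME.fa1} := by
      ext e
      rcases e with e | e <;> cases e <;>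
        simp [csrc, ctgt, clabel, nsrc, msrc, nlabel, mlabel, ntgt, mtgt, h1, h2]
    rw [RMa, hset, finsum_mem_singleton, if_pos h1, if_neg h2]
    norm_num [crate, mrate]
  · have hset : {e : (Nsys a b c).E ⊕ (Msys a b c).E |
        csrc (Nsys a b c) (Msys a b c) e = Sum.inr MS.t0 ∧
        clabel (Nsys a b c) (Msys a b c) e = a ∧
        ctgt (Nsys a b c) (Msys a b c) e ∈ H} = {Sum.inr ME.fa2} := by
      ext e
      rcases e with e | e <;> cases e <;>
        simp [csrc, ctgt, clabel, nsrc, msrc, nlabel, mlabel, ntgt, mtgt, h1, h2]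
    rw [RMa, hset, finsum_mem_singleton, if_neg h1, if_pos h2]
    norm_num [crate, mrate]
  · have hset : {e : (Nsys a b c).E ⊕ (Msys a b c).E |
        csrc (Nsys a b c) (Msys a b c) e = Sum.inr MS.t0 ∧
        clabel (Nsys a b c) (Msys a b c) e = a ∧
        ctgt (Nsys a b c) (Msys a b c) e ∈ H} = ∅ := by
      ext e
      rcases e with e | e <;> cases e <;>
        simp [csrc, ctgt, clabel, nsrc, msrc, nlabel, mlabel, ntgt, mtgt, h1, h2]
    rw [RMa, hset, finsum_mem_empty, if_neg h1, if_neg h2]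
    norm_num

lemma RM3 (hbc : b ≠ c) (H : Set ((Nsys a b c).S ⊕ (Msys a b c).S)) :
    RMa (Nsys a b c) (Msys a b c) b (Sum.inl NS.s1) H =
      if Sum.inl NS.sk ∈ H then 1 else 0 := by
  classical
  by_cases h : Sum.inl NS.sk ∈ H
  · have hset : {e : (Nsys a b c).E ⊕ (Msys a b c).E |
        csrc (Nsys a b c) (Msys a b c) e = Sum.inl NS.s1 ∧
        clabel (Nsys a b c) (Msys a b c) e = b ∧
        ctgt (Nsys a b c) (Msys a b c) e ∈ H} = {Sum.inl NE.eb} := by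
      ext e
      rcases e with e | e <;> cases e <;>
        simp [csrc, ctgt, clabel, nsrc, msrc, nlabel, mlabel, ntgt, mtgt, h, Ne.symm hbc]
    rw [RMa, hset, finsum_mem_singleton, if_pos h]
    norm_num [crate, nrate]
  · have hset : {e : (Nsys a b c).E ⊕ (Msys a b c).E |
        csrc (Nsys a b c) (Msys a b c) e = Sum.inl NS.s1 ∧
        clabel (Nsys a b c) (Msys a b c) e = b ∧
        ctgt (Nsys a b c) (Msys a b c) e ∈ H} = ∅ := by
      ext e
      rcases e with e | e <;> cases e <;>
        simp [csrc, ctgt, clabel, nsrc, msrc, nlabel, mlabel, ntgt, mtgt, h, Ne.symm hbc]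
    rw [RMa, hset, finsum_mem_empty, if_neg h]

lemma RM4 (hbc : b ≠ c) (H : Set ((Nsys a b c).S ⊕ (Msys a b c).S)) :
    RMa (Nsys a b c) (Msys a b c) b (Sum.inr MS.t2) H = 0 := by
  classical
  have hset : {e : (Nsys a b c).E ⊕ (Msys a b c).E |
      csrc (Nsys a b c) (Msys a b c) e = Sum.inr MS.t2 ∧
      clabel (Nsys a b c) (Msys a b c) e = b ∧
      ctgt (Nsys a b c) (Msys a b c) e ∈ H} = ∅ := by
    ext e
    rcases e with e | e <;> cases e <;>
      simp [csrc, ctgt, clabel, nsrc, msrc, nlabel, mlabel, ntgt, mtgt, Ne.symm hbc]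
  rw [RMa, hset, finsum_mem_empty]

end FluidCex


/-- The implication from fluid bisimulation equivalence to fluid trace equivalence is strict:
over any type of actions with three pairwise distinct actions there exist finite RLFTSs that
are fluid trace equivalent but not fluid bisimulation equivalent. -/
theorem RLFTS.fluidTraceEquiv_not_fluidBisimEquiv {Act : Type} (a b c : Act)
    (hab : a ≠ b) (hac : a ≠ c) (hbc : b ≠ c) :
    ∃ N N' : RLFTS Act, Finite N.S ∧ Finite N.E ∧ Finite N'.S ∧ Finite N'.E ∧
      RLFTS.FluidTraceEquiv N N' ∧ ¬ RLFTS.FluidBisimEquiv N N' := by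
  classical
  refine ⟨FluidCex.Nsys a b c, FluidCex.Msys a b c,
    inferInstanceAs (Finite FluidCex.NS), inferInstanceAs (Finite FluidCex.NE),
    inferInstanceAs (Finite FluidCex.MS), inferInstanceAs (Finite FluidCex.ME), ?_, ?_⟩
  · intro σ ς ϱ _
    exact FluidCex.s0_eq a b c hbc σ ς ϱ
  · rintro ⟨R, hEq, h00, hstep⟩
    have key := (hstep _ _ h00).2 a (Sum.inl FluidCex.NS.s1)
    rw [show (FluidCex.Nsys a b c).s0 = FluidCex.NS.s0 from rfl,
      show (FluidCex.Msys a b c).s0 = FluidCex.MS.t0 from rfl] at key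
    rw [FluidCex.RM1, FluidCex.RM2] at key
    rw [if_pos (show Sum.inl FluidCex.NS.s1 ∈ {v | R (Sum.inl FluidCex.NS.s1) v} from hEq.refl _)] at key
    have hR2 : R (Sum.inl FluidCex.NS.s1) (Sum.inr FluidCex.MS.t2) := by
      by_contra hcon
      rw [if_neg (show Sum.inr FluidCex.MS.t2 ∉ {v | R (Sum.inl FluidCex.NS.s1) v} from hcon)] at key
      split_ifs at key <;> norm_num at key
    have key2 := (hstep _ _ hR2).2 b (Sum.inl FluidCex.NS.sk)
    rw [FluidCex.RM3 a b c hbc, FluidCex.RM4 a b c hbc] at key2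
    rw [if_pos (show Sum.inl FluidCex.NS.sk ∈ {v | R (Sum.inl FluidCex.NS.sk) v} from hEq.refl _)] at key2
    norm_num at key2
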